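/- Let p ≥ 1, β > 0, A ∈ ℝ, c ∈ ℝ^p, and let P : ℝ × ℝ^p → ℝ. Suppose v : ℝ × ℝ^p → ℝ is strictly positive everywhere, differentiable in t and twice differentiable in x, and satisfies for all (t,x): ∂ₜv(t,x) + exp(−β·⟨c,x⟩) · ( (1/(2β)) · Δ_x( y ↦ exp(β·⟨c,y⟩)·v(t,y) )(x) + β·(P(t,x) − A)·exp(β·⟨c,x⟩)·v(t,x) ) = 0. Then the function u(t,x) := −(1/β)·Real.log (v(t,x)) satisfies, for all (t,x), (1/(2β))·Δu(t,x) + ∂ₜu(t,x) − ( (1/2)·‖c − ∇u(t,x)‖² + P(t,x) ) + A = 0. -/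

import Mathlib

open scoped RealInnerProductSpace

/-- The spatial Laplacian of `f : ℝ^p → ℝ`: the sum of the second derivatives in the
directions of the standard orthonormal basis (the trace of the Hessian). -/
noncomputable def laplacian {p : ℕ} (f : EuclideanSpace ℝ (Fin p) → ℝ)
    (x : EuclideanSpace ℝ (Fin p)) : ℝ :=
  ∑ i : Fin p,
    fderiv ℝ (fun y => fderiv ℝ f y (EuclideanSpace.single i 1)) x (EuclideanSpace.single i 1)

lemma euclid_decomp {p : ℕ} (y : EuclideanSpace ℝ (Fin p)) :
    ∑ i, y i • (EuclideanSpace.single i 1 : EuclideanSpace ℝ (Fin p)) = y := by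
  have := (EuclideanSpace.basisFun (Fin p) ℝ).sum_repr y
  simpa using this

lemma clm_eq_sum {p : ℕ} (L : EuclideanSpace ℝ (Fin p) →L[ℝ] ℝ) (w : EuclideanSpace ℝ (Fin p)) :
    L w = ∑ i, w i * L (EuclideanSpace.single i 1) := by
  conv_lhs => rw [← euclid_decomp w, map_sum]
  simp

lemma exp_hasFDerivAt {p : ℕ} (c : EuclideanSpace ℝ (Fin p)) (β : ℝ)
    (y : EuclideanSpace ℝ (Fin p)) :
    HasFDerivAt (fun z : EuclideanSpace ℝ (Fin p) => Real.exp (β * ⟪c, z⟫))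
      ((β * Real.exp (β * ⟪c, y⟫)) • innerSL ℝ c) y := by
  have h1 : HasFDerivAt (fun z : EuclideanSpace ℝ (Fin p) => ⟪c, z⟫) (innerSL ℝ c) y :=
    (innerSL ℝ c).hasFDerivAt
  have h2 := (h1.const_mul β).exp
  exact h2.congr_fderiv (by rw [smul_smul, mul_comm])

/-- if a positive `v` solves the twisted Schrödinger equation, then
`u = −(1/β)·log v` solves the viscous Hamilton–Jacobi equation. -/
theorem stmt4 (p : ℕ) (hp : 1 ≤ p) (β : ℝ) (hβ : 0 < β) (A : ℝ)
    (c : EuclideanSpace ℝ (Fin p)) (P : ℝ → EuclideanSpace ℝ (Fin p) → ℝ)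
    (v : ℝ → EuclideanSpace ℝ (Fin p) → ℝ)
    (hvpos : ∀ t x, 0 < v t x)
    (hvt : ∀ x, Differentiable ℝ fun t => v t x)
    (hvx : ∀ t, Differentiable ℝ (v t))
    (hvx2 : ∀ t, Differentiable ℝ fun x => fderiv ℝ (v t) x)
    (hpde : ∀ t x, deriv (fun s => v s x) t + Real.exp (-β * ⟪c, x⟫) *
      ((1 / (2 * β)) * laplacian (fun y => Real.exp (β * ⟪c, y⟫) * v t y) x +
        β * (P t x - A) * Real.exp (β * ⟪c, x⟫) * v t x) = 0)
    (u : ℝ → EuclideanSpace ℝ (Fin p) → ℝ)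
    (hu : ∀ t x, u t x = -(1 / β) * Real.log (v t x)) :
    ∀ t x, (1 / (2 * β)) * laplacian (u t) x + deriv (fun s => u s x) t -
      ((1 / 2) * ‖c - gradient (u t) x‖ ^ 2 + P t x) + A = 0 := by
  intro t x
  set f : EuclideanSpace ℝ (Fin p) → ℝ := v t with hfdef
  have hfd : Differentiable ℝ f := hvx t
  have hfd2 : Differentiable ℝ fun y => fderiv ℝ f y := hvx2 t
  have hfne : ∀ y, f y ≠ 0 := fun y => (hvpos t y).ne'
  set e : Fin p → EuclideanSpace ℝ (Fin p) := fun i => EuclideanSpace.single i 1 with hedef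
  set V : ℝ := f x with hVdef
  set a : ℝ := Real.exp (β * ⟪c, x⟫) with hadef
  have hapos : 0 < a := Real.exp_pos _
  have hVpos : 0 < V := hvpos t x
  set Di : Fin p → ℝ := fun i => fderiv ℝ f x (e i) with hDidef
  set Dii : Fin p → ℝ := fun i => fderiv ℝ (fun y => fderiv ℝ f y (e i)) x (e i) with hDiidef
  set Vt : ℝ := deriv (fun s => v s x) t with hVtdef
  -- evaluation maps: HasFDerivAt of y ↦ fderiv f y (e i)
  have hF : ∀ (i : Fin p) (y : EuclideanSpace ℝ (Fin p)),
      HasFDerivAt (fun z => fderiv ℝ f z (e i))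
        ((fderiv ℝ (fun z => fderiv ℝ f z) y).flip (e i)) y := by
    intro i y
    have h := ((hfd2 y).hasFDerivAt).clm_apply (hasFDerivAt_const (e i) y)
    simpa using h
  have hDii' : ∀ i, Dii i = (fderiv ℝ (fun z => fderiv ℝ f z) x) (e i) (e i) := by
    intro i
    rw [hDiidef]
    simp only [(hF i x).fderiv]
    rfl
  -- derivative of the twisted function w
  have hw : ∀ y, HasFDerivAt (fun z => Real.exp (β * ⟪c, z⟫) * f z)
      ((Real.exp (β * ⟪c, y⟫)) • fderiv ℝ f y +
        (f y) • ((β * Real.exp (β * ⟪c, y⟫)) • innerSL ℝ c)) y :=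
    fun y => (exp_hasFDerivAt c β y).mul (hfd y).hasFDerivAt
  have hker : ∀ i : Fin p, (fun y => fderiv ℝ (fun z => Real.exp (β * ⟪c, z⟫) * f z) y (e i))
      = fun y => Real.exp (β * ⟪c, y⟫) * (fderiv ℝ f y (e i))
          + β * c i * (Real.exp (β * ⟪c, y⟫) * f y) := by
    intro i
    funext y
    rw [(hw y).fderiv]
    simp [hedef, EuclideanSpace.inner_single_right]
    ring
  -- laplacian of w
  have hlapw : laplacian (fun y => Real.exp (β * ⟪c, y⟫) * f y) x
      = ∑ i, (a * Dii i + (2 * β * a) * (c i * Di i) + (β ^ 2 * a * V) * (c i) ^ 2) := by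
    unfold laplacian
    refine Finset.sum_congr rfl fun i _ => ?_
    have hgi : HasFDerivAt (fun y => Real.exp (β * ⟪c, y⟫) * (fderiv ℝ f y (e i))
          + β * c i * (Real.exp (β * ⟪c, y⟫) * f y))
        (((a • (fderiv ℝ (fun z => fderiv ℝ f z) x).flip (e i)
            + (fderiv ℝ f x (e i)) • ((β * a) • innerSL ℝ c)))
          + (β * c i) • (a • fderiv ℝ f x + V • ((β * a) • innerSL ℝ c))) x :=
      ((exp_hasFDerivAt c β x).mul (hF i x)).add
        (((exp_hasFDerivAt c β x).mul (hfd x).hasFDerivAt).const_mul (β * c i))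
    rw [show (fun y => fderiv ℝ (fun z => Real.exp (β * ⟪c, z⟫) * f z) y (EuclideanSpace.single i 1))
        = fun y => Real.exp (β * ⟪c, y⟫) * (fderiv ℝ f y (e i))
          + β * c i * (Real.exp (β * ⟪c, y⟫) * f y) from hker i]
    rw [hgi.fderiv]
    have : (innerSL ℝ c) (e i) = c i := by
      simp [hedef, EuclideanSpace.inner_single_right]
    simp only [ContinuousLinearMap.add_apply, ContinuousLinearMap.smul_apply,
      ContinuousLinearMap.flip_apply, this, smul_eq_mul]
    rw [← hDii' i]
    rw [show (innerSL ℝ c) (EuclideanSpace.single i 1) = c i from this]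
    show a * _ + Di i * (β * a * c i) + β * c i * (a * Di i + V * (β * a * c i)) = _
    ring
  -- derivative of u in space
  have huU : (u t) = fun y => -(1 / β) * Real.log (f y) := funext fun y => hu t y
  have hud : ∀ y, HasFDerivAt (u t) ((-(1 / β) * (f y)⁻¹) • fderiv ℝ f y) y := by
    intro y
    rw [huU]
    have h := (((hfd y).hasFDerivAt).log (hfne y)).const_mul (-(1 / β))
    rwa [smul_smul] at h
  -- laplacian of u
  have hinv : ∀ y, HasFDerivAt (fun z => (f z)⁻¹) ((-((f y) ^ 2)⁻¹) • fderiv ℝ f y) y :=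
    fun y => (hasDerivAt_inv (hfne y)).comp_hasFDerivAt y (hfd y).hasFDerivAt
  have hlapu : laplacian (u t) x
      = ∑ i, ((-(1 / β) * V⁻¹) * Dii i + ((1 / β) * (V ^ 2)⁻¹) * (Di i) ^ 2) := by
    unfold laplacian
    refine Finset.sum_congr rfl fun i _ => ?_
    have hkeru : (fun y => fderiv ℝ (u t) y (EuclideanSpace.single i 1))
        = fun y => -(1 / β) * ((f y)⁻¹ * fderiv ℝ f y (e i)) := by
      funext y
      rw [(hud y).fderiv]
      simp [hedef, mul_assoc]
    rw [hkeru]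
    have hgi : HasFDerivAt (fun y => -(1 / β) * ((f y)⁻¹ * fderiv ℝ f y (e i)))
        ((-(1 / β)) • ((f x)⁻¹ • (fderiv ℝ (fun z => fderiv ℝ f z) x).flip (e i)
          + (fderiv ℝ f x (e i)) • ((-((f x) ^ 2)⁻¹) • fderiv ℝ f x))) x :=
      ((hinv x).mul (hF i x)).const_mul (-(1 / β))
    rw [hgi.fderiv]
    simp only [ContinuousLinearMap.smul_apply, ContinuousLinearMap.add_apply,
      ContinuousLinearMap.flip_apply, smul_eq_mul]
    rw [← hDii' i]
    show -(1 / β) * (V⁻¹ * Dii i + Di i * (-(V ^ 2)⁻¹ * Di i)) = _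
    ring
  -- gradient of u
  have hgradf : ∀ w, ⟪gradient f x, w⟫ = fderiv ℝ f x w := by
    intro w
    exact InnerProductSpace.toDual_symm_apply
  have hgrad : gradient (u t) x = (-(1 / β) * V⁻¹) • gradient f x := by
    unfold gradient
    rw [(hud x).fderiv]
    simp
    rfl
  have hGi : ∀ i, gradient f x i = Di i := by
    intro i
    have h := hgradf (e i)
    rw [hedef] at h
    rw [EuclideanSpace.inner_single_right] at h
    simpa only [one_mul, conj_trivial] using h
  have hnormG : ‖gradient f x‖ ^ 2 = ∑ i, (Di i) ^ 2 := by
    rw [← real_inner_self_eq_norm_sq, hgradf, clm_eq_sum]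
    refine Finset.sum_congr rfl fun i _ => ?_
    rw [hGi i]
    ring
  have hinnercG : ⟪c, gradient f x⟫ = ∑ i, c i * Di i := by
    rw [real_inner_comm, hgradf, clm_eq_sum]
  have hnormc : ‖c‖ ^ 2 = ∑ i, (c i) ^ 2 := by
    rw [← real_inner_self_eq_norm_sq, show (inner ℝ c c : ℝ) = innerSL ℝ c c from rfl, clm_eq_sum]
    refine Finset.sum_congr rfl fun i _ => ?_
    have : (innerSL ℝ c) (EuclideanSpace.single i 1) = c i := by
      simp [EuclideanSpace.inner_single_right]
    rw [this]; ring
  -- time derivative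
  have hUt : deriv (fun s => u s x) t = -(1 / β) * (Vt / V) := by
    have hT : (fun s => u s x) = fun s => -(1 / β) * Real.log (v s x) :=
      funext fun s => hu s x
    rw [hT]
    have h1 : HasDerivAt (fun s => v s x) Vt t := ((hvt x) t).hasDerivAt
    have h := (h1.log (hvpos t x).ne').const_mul (-(1 / β))
    rw [h.deriv]
  -- the PDE in scalar form
  have hpde1 := hpde t x
  rw [hlapw] at hpde1
  set S1 : ℝ := ∑ i, Dii i with hS1
  set S2 : ℝ := ∑ i, c i * Di i with hS2
  set S3 : ℝ := ∑ i, (Di i) ^ 2 with hS3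
  set S4 : ℝ := ∑ i, (c i) ^ 2 with hS4
  have hsumw : ∑ i, (a * Dii i + (2 * β * a) * (c i * Di i) + (β ^ 2 * a * V) * (c i) ^ 2)
      = a * S1 + (2 * β * a) * S2 + (β ^ 2 * a * V) * S4 := by
    rw [hS1, hS2, hS4, Finset.mul_sum, Finset.mul_sum, Finset.mul_sum,
      ← Finset.sum_add_distrib, ← Finset.sum_add_distrib]
  rw [hsumw] at hpde1
  have hexpneg : Real.exp (-β * ⟪c, x⟫) = a⁻¹ := by
    rw [hadef, ← Real.exp_neg]
    ring_nf
  rw [hexpneg] at hpde1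
  have hane : a ≠ 0 := hapos.ne'
  have hVne : V ≠ 0 := hVpos.ne'
  have hβne : β ≠ 0 := hβ.ne'
  have hpde2 : Vt + ((1 / (2 * β)) * (S1 + 2 * β * S2 + β ^ 2 * V * S4)
      + β * (P t x - A) * V) = 0 := by
    have : a⁻¹ * (1 / (2 * β) * (a * S1 + 2 * β * a * S2 + β ^ 2 * a * V * S4)
        + β * (P t x - A) * a * V)
        = (1 / (2 * β)) * (S1 + 2 * β * S2 + β ^ 2 * V * S4) + β * (P t x - A) * V := by
      field_simp
    rw [this] at hpde1
    exact hpde1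
  -- assemble the goal
  rw [hlapu, hUt, hgrad, norm_sub_sq_real, real_inner_smul_right, hinnercG, norm_smul,
    mul_pow, hnormG, hnormc, Real.norm_eq_abs, sq_abs]
  have hsumu : ∑ i, ((-(1 / β) * V⁻¹) * Dii i + ((1 / β) * (V ^ 2)⁻¹) * (Di i) ^ 2)
      = (-(1 / β) * V⁻¹) * S1 + ((1 / β) * (V ^ 2)⁻¹) * S3 := by
    rw [hS1, hS3, Finset.mul_sum, Finset.mul_sum, ← Finset.sum_add_distrib]
  rw [hsumu]
  have hVteq : Vt = -((1 / (2 * β)) * (S1 + 2 * β * S2 + β ^ 2 * V * S4)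
      + β * (P t x - A) * V) := by linarith
  rw [hVteq]
  field_simp
  ring
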